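/- Let a and b be positive integers, let 1 ≤ s_1 < s_2 < ⋯ < s_a ≤ a+b be integers, and let {r_1 < r_2 < ⋯ < r_b} = {1, …, a+b} ∖ {s_1, …, s_a}. Then for every real number q with 0 < q < 1, S_{q^{−1}}({s_1,…,s_a}) = q^{−(a+1)·(ab − ∑_{i=1}^{b}(r_i − i))} · S_q({s_1,…,s_a}), where S_{q^{−1}} denotes the same expression as S_q with q replaced by q^{−1}. -/

import Mathlib

open scoped Classical

/-- `∏_{u < v in U} (q^v - q^u)`. -/
noncomputable def vand (q : ℝ) (U : Finset ℕ) : ℝ :=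
  ∏ u ∈ U, ∏ v ∈ U.filter (fun v => u < v), (q ^ v - q ^ u)

/-- For `U = {u₁ < u₂ < ⋯ < u_k}` a finite set of positive integers,
`S_q(U) = q^{∑ (uᵢ - i)} ∏_{i<j} (q^{u_j} - q^{u_i})/(q^j - q^i)`, the Schur
function `s_{λ(U)}(q, q², …, q^k)`. -/
noncomputable def Sq (q : ℝ) (U : Finset ℕ) : ℝ :=
  q ^ ((∑ u ∈ U, (u : ℤ)) - ((U.card : ℤ) * (U.card + 1)) / 2) *
    vand q U / vand q (Finset.Icc 1 U.card)

/-- Inverting the base `q ↦ q⁻¹` in `S_q` of a set `{s₁ < … < s_a} ⊆ [a+b]`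
with complement `{r₁ < … < r_b}`. -/

lemma prod_zpow_sum (q : ℝ) (hq : q ≠ 0) {α : Type*} (s : Finset α) (f : α → ℤ) :
    ∏ i ∈ s, q ^ f i = q ^ (∑ i ∈ s, f i) := by
  induction s using Finset.cons_induction with
  | empty => simp
  | cons a s ha ih => rw [Finset.prod_cons, Finset.sum_cons, zpow_add₀ hq, ih]

lemma filter_cards (U : Finset ℕ) {u : ℕ} (hu : u ∈ U) :
    (U.filter (fun v => v < u)).card + (U.filter (fun v => u < v)).card = U.card - 1 := by
  have hdisj : Disjoint (U.filter (fun v => v < u)) (U.filter (fun v => u < v)) := by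
    simp only [Finset.disjoint_left, Finset.mem_filter]
    rintro x ⟨-, h1⟩ ⟨-, h2⟩; omega
  rw [← Finset.card_union_of_disjoint hdisj]
  have : U.filter (fun v => v < u) ∪ U.filter (fun v => u < v) = U.erase u := by
    ext x
    simp only [Finset.mem_union, Finset.mem_filter, Finset.mem_erase]
    constructor
    · rintro (⟨h, h'⟩ | ⟨h, h'⟩) <;> exact ⟨by omega, h⟩
    · rintro ⟨h, h'⟩
      rcases lt_or_gt_of_ne (fun e => h (by omega) : x ≠ u) with h2 | h2
      · exact Or.inl ⟨h', h2⟩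
      · exact Or.inr ⟨h', h2⟩
  rw [this, Finset.card_erase_of_mem hu]

lemma pairCount_symm (U : Finset ℕ) :
    ∑ u ∈ U, (U.filter (fun v => u < v)).card = ∑ u ∈ U, (U.filter (fun v => v < u)).card := by
  simp only [Finset.card_filter]
  exact Finset.sum_comm

lemma two_pairCount (U : Finset ℕ) :
    2 * ∑ u ∈ U, (U.filter (fun v => u < v)).card = U.card * (U.card - 1) := by
  rw [two_mul]
  nth_rewrite 1 [pairCount_symm]
  rw [← Finset.sum_add_distrib,
    Finset.sum_congr rfl (fun u hu => filter_cards U hu),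
    Finset.sum_const, smul_eq_mul]

lemma gauss (n : ℕ) : 2 * ∑ i ∈ Finset.Icc 1 n, (i : ℤ) = n * (n + 1) := by
  induction n with
  | zero => simp
  | succ n ih =>
    rw [Finset.sum_Icc_succ_top (by omega)]
    push_cast
    push_cast at ih
    linear_combination ih

lemma pair_sum (U : Finset ℕ) :
    ∑ u ∈ U, ∑ v ∈ U.filter (fun v => u < v), ((u : ℤ) + v)
      = ((U.card : ℤ) - 1) * ∑ u ∈ U, (u : ℤ) := by
  have step1 : ∑ u ∈ U, ∑ v ∈ U.filter (fun v => u < v), ((u : ℤ) + v)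
      = ∑ u ∈ U, (((U.filter (fun v => u < v)).card : ℤ) * u
          + ∑ v ∈ U.filter (fun v => u < v), (v : ℤ)) := by
    refine Finset.sum_congr rfl fun u _ => ?_
    rw [Finset.sum_add_distrib, Finset.sum_const, nsmul_eq_mul]
  have step2 : ∑ u ∈ U, ∑ v ∈ U.filter (fun v => u < v), (v : ℤ)
      = ∑ u ∈ U, ((U.filter (fun v => v < u)).card : ℤ) * u := by
    simp only [Finset.sum_filter]
    rw [Finset.sum_comm]
    refine Finset.sum_congr rfl fun v _ => ?_
    rw [← Finset.sum_filter, Finset.sum_const, nsmul_eq_mul]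
  rw [step1, Finset.sum_add_distrib, step2, ← Finset.sum_add_distrib, Finset.mul_sum]
  refine Finset.sum_congr rfl fun u hu => ?_
  have h := filter_cards U hu
  have hc : 1 ≤ U.card := Finset.card_pos.2 ⟨u, hu⟩
  have : ((U.filter (fun v => u < v)).card : ℤ) + ((U.filter (fun v => v < u)).card : ℤ)
      = (U.card : ℤ) - 1 := by omega
  rw [← add_mul, this]

lemma vand_inv {q : ℝ} (hq : 0 < q) (U : Finset ℕ) :
    vand q⁻¹ U = (-1) ^ (∑ u ∈ U, (U.filter (fun v => u < v)).card)
      * q ^ (-(((U.card : ℤ) - 1) * ∑ u ∈ U, (u : ℤ))) * vand q U := by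
  have hq0 : q ≠ 0 := ne_of_gt hq
  have key : ∀ u v : ℕ, (q⁻¹) ^ v - (q⁻¹) ^ u
      = (-1) * q ^ (-(u : ℤ) + -(v : ℤ)) * (q ^ v - q ^ u) := by
    intro u v
    rw [zpow_add₀ hq0, zpow_neg, zpow_neg, zpow_natCast, zpow_natCast, inv_pow, inv_pow]
    field_simp
    ring
  unfold vand
  rw [Finset.prod_congr rfl fun u _ => Finset.prod_congr rfl fun v _ => key u v]
  simp only [Finset.prod_mul_distrib]
  congr 1
  congr 1
  · simp only [Finset.prod_const]
    rw [Finset.prod_pow_eq_pow_sum]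
  rw [Finset.prod_congr rfl fun u (_ : u ∈ U) =>
      prod_zpow_sum q hq0 (U.filter (fun v => u < v)) (fun v => -(u : ℤ) + -(v : ℤ)),
    prod_zpow_sum q hq0]
  congr 1
  have : ∑ u ∈ U, ∑ v ∈ U.filter (fun v => u < v), (-(u : ℤ) + -(v : ℤ))
      = -∑ u ∈ U, ∑ v ∈ U.filter (fun v => u < v), ((u : ℤ) + v) := by
    rw [← Finset.sum_neg_distrib]
    refine Finset.sum_congr rfl fun u _ => ?_
    rw [← Finset.sum_neg_distrib]
    exact Finset.sum_congr rfl fun v _ => by ring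
  rw [this, pair_sum]

theorem Sq_inv_base (a b : ℕ) (ha : 0 < a) (hb : 0 < b)
    (q : ℝ) (hq0 : 0 < q) (hq1 : q < 1)
    (U : Finset ℕ) (hU : U ⊆ Finset.Icc 1 (a + b)) (hcard : U.card = a) :
    Sq q⁻¹ U
      = q ^ (-(((a : ℤ) + 1) * ((a : ℤ) * b -
          ((∑ r ∈ Finset.Icc 1 (a + b) \ U, (r : ℤ)) -
            ((b : ℤ) * (b + 1)) / 2)))) * Sq q U := by
  have hqne : q ≠ 0 := ne_of_gt hq0
  unfold Sq
  rw [hcard]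
  set I := Finset.Icc 1 a with hI
  have hIcard : I.card = a := by simp [hI]
  rw [vand_inv hq0 U, vand_inv hq0 I, hIcard, hcard]
  -- identify the sign counts
  set n := ∑ u ∈ U, (U.filter (fun v => u < v)).card with hn
  have hNN : ∑ u ∈ I, (I.filter (fun v => u < v)).card = n := by
    have h1 := two_pairCount U
    have h2 := two_pairCount I
    rw [hcard] at h1
    rw [hIcard] at h2
    omega
  rw [hNN]
  set SU := ∑ u ∈ U, (u : ℤ) with hSU
  set T := ∑ u ∈ I, (u : ℤ) with hT
  set SC := ∑ r ∈ Finset.Icc 1 (a + b) \ U, (r : ℤ) with hSC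
  -- exponent bookkeeping
  set E : ℤ := SU - ((a : ℤ) * ((a : ℤ) + 1)) / 2 with hE
  set A : ℤ := -(((a : ℤ) - 1) * SU) with hA
  set B : ℤ := -(((a : ℤ) - 1) * T) with hB
  set C : ℤ := -(((a : ℤ) + 1) * ((a : ℤ) * b - (SC - ((b : ℤ) * ((b : ℤ) + 1)) / 2))) with hC
  have hT2 : 2 * T = (a : ℤ) * (a + 1) := gauss a
  have hTot : 2 * ∑ i ∈ Finset.Icc 1 (a + b), (i : ℤ) = ((a : ℤ) + b) * ((a : ℤ) + b + 1) := by
    have := gauss (a + b); push_cast at this ⊢; linarith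
  have hsum : SC + SU = ∑ i ∈ Finset.Icc 1 (a + b), (i : ℤ) := Finset.sum_sdiff hU
  have hDA : 2 * (((a : ℤ) * ((a : ℤ) + 1)) / 2) = (a : ℤ) * ((a : ℤ) + 1) :=
    Int.mul_ediv_cancel' (Int.even_mul_succ_self (a : ℤ)).two_dvd
  have hDB : 2 * (((b : ℤ) * ((b : ℤ) + 1)) / 2) = (b : ℤ) * ((b : ℤ) + 1) :=
    Int.mul_ediv_cancel' (Int.even_mul_succ_self (b : ℤ)).two_dvd
  have hexp : -E + (A - B) = C + E := by
    have h2 : 2 * (-E + (A - B)) = 2 * (C + E) := by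
      rw [hE, hA, hB, hC]
      linear_combination ((a : ℤ) - 1) * hT2 + 2 * hDA + ((a : ℤ) + 1) * hDB
        - ((a : ℤ) + 1) * hTot - 2 * ((a : ℤ) + 1) * hsum
    linarith
  -- now the real-number manipulation
  have hs : ((-1 : ℝ) ^ n) ≠ 0 := pow_ne_zero _ (by norm_num)
  have hvI : vand q I ≠ 0 := by
    unfold vand
    rw [Finset.prod_ne_zero_iff]
    intro u hu
    rw [Finset.prod_ne_zero_iff]
    intro v hv
    rw [Finset.mem_filter] at hv
    have : q ^ v < q ^ u := pow_lt_pow_right_of_lt_one₀ hq0 hq1 hv.2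
    linarith
  have hzA : (q : ℝ) ^ A = q ^ B * q ^ (A - B) := by
    rw [← zpow_add₀ hqne]; ring_nf
  rw [inv_zpow, ← zpow_neg, hzA]
  rw [show q ^ (-E) * ((-1 : ℝ) ^ n * (q ^ B * q ^ (A - B)) * vand q U)
      = ((-1 : ℝ) ^ n * q ^ B) * (q ^ (-E) * q ^ (A - B) * vand q U) from by ring,
    show (-1 : ℝ) ^ n * q ^ B * vand q I = ((-1 : ℝ) ^ n * q ^ B) * vand q I from by ring,
    mul_div_mul_left _ _ (mul_ne_zero hs (zpow_ne_zero _ hqne))]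
  rw [← zpow_add₀ hqne, hexp, zpow_add₀ hqne]
  ring
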